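/- Let G be a graph on n vertices and k ∈ [n−1]. For any feasible solution X of the SDP relaxation (SDP_k) for G, the scaled matrix (1/k)·X is feasible for (SDP_1). Consequently, θ_k(G) ≤ k·θ_1(G). -/

import Mathlib

/-- The bordered matrix `[[k, diag(X)ᵀ],[diag(X), X]]`. -/
def border {V : Type*} (k : ℝ) (X : Matrix V V ℝ) :
    Matrix (Unit ⊕ V) (Unit ⊕ V) ℝ :=
  Matrix.fromBlocks (Matrix.of fun _ _ => k) (Matrix.of fun _ i => X i i)
    (Matrix.of fun i _ => X i i) X

/-- Feasibility for the SDP relaxation (SDP_k). -/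
def SDPfeasible {V : Type*} [Fintype V] (G : SimpleGraph V) (k : ℝ)
    (X : Matrix V V ℝ) : Prop :=
  X.IsSymm ∧ (∀ i j, G.Adj i j → X i j = 0) ∧ (∀ i j, 0 ≤ X i j) ∧
    (∀ i, X i i ≤ 1) ∧ (border k X).PosSemidef

/-- `θ_k(G)`, the optimal value of (SDP_k). -/
noncomputable def theta {V : Type*} [Fintype V] (G : SimpleGraph V) (k : ℝ) : ℝ :=
  sSup {t : ℝ | ∃ X : Matrix V V ℝ, SDPfeasible G k X ∧ t = X.trace}

lemma psd_smul {m : Type*} [Fintype m] {c : ℝ} (hc : 0 ≤ c) {M : Matrix m m ℝ}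
    (hM : M.PosSemidef) : (c • M).PosSemidef := by
  rw [Matrix.posSemidef_iff_dotProduct_mulVec] at hM ⊢
  constructor
  · have := hM.1
    rw [Matrix.IsHermitian] at this ⊢
    rw [Matrix.conjTranspose_smul, this]
    congr 1
  · intro x
    have := hM.2 x
    simp only [Matrix.smul_mulVec, dotProduct_smul]
    exact smul_nonneg hc this

lemma border_smul {V : Type*} (k : ℝ) (X : Matrix V V ℝ) (hk : k ≠ 0) :
    border 1 ((1 / k) • X) = (1 / k) • border k X := by
  ext i j
  cases i <;> cases j <;>
    simp [border, Matrix.fromBlocks, one_div, inv_mul_cancel₀ hk]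

lemma zero_feasible {V : Type*} [Fintype V] (G : SimpleGraph V) {k : ℝ} (hk : 0 ≤ k) :
    SDPfeasible G k (0 : Matrix V V ℝ) := by
  refine ⟨by simp [Matrix.IsSymm], by simp, by simp, by simp, Matrix.posSemidef_iff_dotProduct_mulVec.mpr ⟨?_, ?_⟩⟩
  · ext i j
    cases i <;> cases j <;> simp [border, Matrix.IsHermitian, Matrix.conjTranspose,
      Matrix.fromBlocks]
  · intro x
    have h : dotProduct (star x) ((border k (0 : Matrix V V ℝ)).mulVec x)
        = k * (x (Sum.inl ()) * x (Sum.inl ())) := by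
      simp [border, Matrix.mulVec, dotProduct, Fintype.sum_sum_type]
      ring
    show 0 ≤ dotProduct (star x) ((border k (0 : Matrix V V ℝ)).mulVec x)
    rw [h]
    exact mul_nonneg hk (mul_self_nonneg _)

theorem stmt_13 {n : ℕ} (G : SimpleGraph (Fin n)) (k : ℕ)
    (hk1 : 1 ≤ k) (hkn : k ≤ n - 1) :
    (∀ X : Matrix (Fin n) (Fin n) ℝ,
        SDPfeasible G (k : ℝ) X → SDPfeasible G 1 ((1 / (k : ℝ)) • X)) ∧
      theta G (k : ℝ) ≤ (k : ℝ) * theta G 1 := by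
  have hkpos : (0 : ℝ) < k := by exact_mod_cast hk1
  have hkne : (k : ℝ) ≠ 0 := hkpos.ne'
  have hinv : 0 ≤ 1 / (k : ℝ) := by positivity
  have feas : ∀ X : Matrix (Fin n) (Fin n) ℝ,
      SDPfeasible G (k : ℝ) X → SDPfeasible G 1 ((1 / (k : ℝ)) • X) := by
    intro X ⟨hs, he, hnn, hd, hpsd⟩
    refine ⟨?_, ?_, ?_, ?_, ?_⟩
    · rw [Matrix.IsSymm] at hs ⊢
      rw [Matrix.transpose_smul, hs]
    · intro i j hij; simp [he i j hij]
    · intro i j; exact smul_nonneg hinv (hnn i j)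
    · intro i
      have h1 : 1 / (k : ℝ) ≤ 1 := by
        rw [div_le_one hkpos]; exact_mod_cast hk1
      calc ((1 / (k : ℝ)) • X) i i = (1 / (k : ℝ)) * X i i := rfl
        _ ≤ 1 * 1 := mul_le_mul h1 (hd i) (hnn i i) one_pos.le
        _ = 1 := one_mul 1
    · rw [border_smul _ _ hkne]
      exact psd_smul hinv hpsd
  refine ⟨feas, ?_⟩
  have hbdd : BddAbove {t : ℝ | ∃ X : Matrix (Fin n) (Fin n) ℝ,
      SDPfeasible G 1 X ∧ t = X.trace} := by
    refine ⟨n, ?_⟩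
    rintro t ⟨X, hX, rfl⟩
    calc X.trace = ∑ i, X i i := rfl
      _ ≤ ∑ _i : Fin n, (1 : ℝ) := Finset.sum_le_sum fun i _ => hX.2.2.2.1 i
      _ = n := by simp
  have htheta1 : 0 ≤ theta G 1 := by
    have h0 : (0 : ℝ) ∈ {t : ℝ | ∃ X : Matrix (Fin n) (Fin n) ℝ,
        SDPfeasible G 1 X ∧ t = X.trace} :=
      ⟨0, zero_feasible G one_pos.le, by simp⟩
    exact le_csSup hbdd h0
  apply Real.sSup_le _ (mul_nonneg hkpos.le htheta1)
  rintro t ⟨X, hX, rfl⟩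
  have hmem : ((1 / (k : ℝ)) • X).trace ∈ {t : ℝ | ∃ X : Matrix (Fin n) (Fin n) ℝ,
      SDPfeasible G 1 X ∧ t = X.trace} := ⟨_, feas X hX, rfl⟩
  have hle := le_csSup hbdd hmem
  have htr : ((1 / (k : ℝ)) • X).trace = (1 / (k : ℝ)) * X.trace := by
    simp [Matrix.trace_smul, smul_eq_mul]
  rw [htr] at hle
  calc X.trace = (k : ℝ) * ((1 / (k : ℝ)) * X.trace) := by field_simp
    _ ≤ (k : ℝ) * theta G 1 := by
        exact mul_le_mul_of_nonneg_left hle hkpos.le
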